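/- For positive definite matrices P and Q and any function k of the form k(λ) = ∫₀^∞ σ(s)/(s+λ) ds with σ a nonnegative measure satisfying σ(1/s) = s σ(s) and k(1) = 1, one has the operator inequalities R_P^{-1} + L_Q^{-1} ≥ R_P^{-1} k(L_Q R_P^{-1}) ≥ (R_P + L_Q)^{-1} as positive operators on the Hilbert–Schmidt space. -/

import Mathlib

open Matrix MeasureTheory
open scoped ComplexOrder

/-- Kubo–Ando type operator inequalities: for positive definite `P, Q` and a
function `k(λ) = ∫₀^∞ σ(s)/(s+λ) ds` built from a nonnegative density `σ`
satisfying the symmetry `σ(1/s) = s σ(s)` and the normalization `k(1) = 1`,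
one has `R_P⁻¹ + L_Q⁻¹ ≥ R_P⁻¹ k(L_Q R_P⁻¹) ≥ (R_P + L_Q)⁻¹` in the sense of
quadratic forms on the Hilbert–Schmidt space.  Here, for `s > 0`,
`B s = (L_Q + s R_P)⁻¹(A)` (so that `R_P⁻¹ k(L_Q R_P⁻¹)(A) = ∫₀^∞ B s σ(s) ds`)
and `C = (R_P + L_Q)⁻¹(A)`. -/

private lemma trace_re_nonneg' {n : ℕ} {M : Matrix (Fin n) (Fin n) ℂ} (hM : M.PosSemidef) :
    0 ≤ M.trace.re := by
  have h : ∀ i, 0 ≤ (M i i).re := by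
    intro i
    have h2 := hM.dotProduct_mulVec_nonneg (Pi.single i 1)
    simp [dotProduct, Matrix.mulVec, Pi.single_apply, Finset.sum_ite_eq] at h2
    exact (Complex.le_def.mp h2).1
  simp only [Matrix.trace, Matrix.diag, Complex.re_sum]
  exact Finset.sum_nonneg fun i _ => h i

private lemma key1' {n : ℕ} {P Q A B : Matrix (Fin n) (Fin n) ℂ} (hP : P.PosDef) (hQ : Q.PosDef)
    {s : ℝ} (hs : 0 < s) (hAB : Q * B + (s : ℂ) • (B * P) = A) :
    (s + 1) * ((Aᴴ * B).trace).re ≤ ((Aᴴ * (A * P⁻¹ + Q⁻¹ * A)).trace).re := by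
  have hPP : P * P⁻¹ = 1 := Matrix.mul_nonsing_inv P hP.det_pos.ne'.isUnit
  have hPiP : P⁻¹ * P = 1 := Matrix.nonsing_inv_mul P hP.det_pos.ne'.isUnit
  have hQc : ∀ X : Matrix (Fin n) (Fin n) ℂ, Q * (Q⁻¹ * X) = X := by
    intro X; rw [← mul_assoc, Matrix.mul_nonsing_inv Q hQ.det_pos.ne'.isUnit, one_mul]
  have hQc' : ∀ X : Matrix (Fin n) (Fin n) ℂ, Q⁻¹ * (Q * X) = X := by
    intro X; rw [← mul_assoc, Matrix.nonsing_inv_mul Q hQ.det_pos.ne'.isUnit, one_mul]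
  -- atoms
  set c1 := (Bᴴ*(Q*B)).trace with hc1
  set c2 := (Bᴴ*(B*P)).trace with hc2
  set c7 := (Bᴴ*(Q*(Q*(B*P⁻¹)))).trace with hc7
  set c8 := (P*(Bᴴ*(Q⁻¹*(B*P)))).trace with hc8
  -- H1
  have H1 : (Aᴴ * B).trace = c1 + (s:ℂ) * c2 := by
    rw [← hAB]
    simp only [conjTranspose_add, conjTranspose_smul, conjTranspose_mul, hQ.1.eq, hP.1.eq,
      Complex.star_def, Complex.conj_ofReal, add_mul, smul_mul_assoc,
      trace_add, trace_smul, smul_eq_mul, mul_assoc, hc1, hc2]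
    rw [Matrix.trace_mul_comm P (Bᴴ * B)]
    simp [mul_assoc]
  -- H5
  have H5 : (Aᴴ * (A * P⁻¹ + Q⁻¹ * A)).trace
      = c7 + ((2*s+1 : ℝ):ℂ) * c1 + ((s^2+2*s : ℝ):ℂ) * c2 + ((s^2 : ℝ):ℂ) * c8 := by
    rw [← hAB]
    simp only [conjTranspose_add, conjTranspose_smul, conjTranspose_mul, hQ.1.eq, hP.1.eq,
      Complex.star_def, Complex.conj_ofReal, add_mul, mul_add, smul_mul_assoc, mul_smul_comm,
      smul_smul, trace_add, trace_smul, smul_eq_mul, mul_assoc, hPP, hPiP, hQc, hQc',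
      mul_one, one_mul, hc1, hc2, hc7, hc8]
    rw [Matrix.trace_mul_comm P (Bᴴ*(Q*(B*P⁻¹))), Matrix.trace_mul_comm P (Bᴴ*B)]
    simp only [mul_assoc, hPiP, mul_one, hc1, hc2]
    push_cast
    ring
  -- positivity
  have p1 : 0 ≤ c1.re := by
    have := trace_re_nonneg' (hQ.posSemidef.conjTranspose_mul_mul_same B)
    simpa [hc1, mul_assoc] using this
  have p2 : 0 ≤ c2.re := by
    have := trace_re_nonneg' (hP.posSemidef.mul_mul_conjTranspose_same B)
    rw [hc2, Matrix.trace_mul_comm]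
    simpa [mul_assoc] using this
  have p7 : 0 ≤ c7.re := by
    have := trace_re_nonneg' ((hP.inv).posSemidef.mul_mul_conjTranspose_same (Q*B))
    rw [Matrix.trace_mul_comm] at this
    simpa [hc7, mul_assoc, conjTranspose_mul, hQ.1.eq] using this
  have p8 : 0 ≤ c8.re := by
    have := trace_re_nonneg' ((hQ.inv).posSemidef.conjTranspose_mul_mul_same (B*P))
    simpa [hc8, mul_assoc, conjTranspose_mul, hP.1.eq] using this
  -- assemble
  have R1 := congrArg Complex.re H1
  have R5 := congrArg Complex.re H5
  simp only [Complex.add_re, Complex.re_ofReal_mul] at R1 R5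
  rw [R1, R5]
  nlinarith [mul_nonneg hs.le p1, mul_nonneg hs.le p2,
    mul_nonneg (mul_nonneg hs.le hs.le) p8, sq_nonneg s]

private lemma key2' {n : ℕ} {P Q A B C : Matrix (Fin n) (Fin n) ℂ} (hP : P.PosDef) (hQ : Q.PosDef)
    {s : ℝ} (hs : 0 < s) (hAB : Q * B + (s : ℂ) • (B * P) = A)
    (hAC : Q * C + C * P = A) :
    ((Aᴴ * C).trace).re ≤ (s + 1) * ((Aᴴ * B).trace).re := by
  have hPP : P * P⁻¹ = 1 := Matrix.mul_nonsing_inv P hP.det_pos.ne'.isUnit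
  have hPiP : P⁻¹ * P = 1 := Matrix.nonsing_inv_mul P hP.det_pos.ne'.isUnit
  set D := C - B with hDdef
  have hD : Q * D + D * P = ((s - 1 : ℝ):ℂ) • (B * P) := by
    have h := hAC.trans hAB.symm
    calc Q * D + D * P = (Q*C + C*P) - (Q*B + B*P) := by
          rw [hDdef, mul_sub, sub_mul]; abel
      _ = (Q*B + (s:ℂ)•(B*P)) - (Q*B + B*P) := by rw [h]
      _ = ((s - 1 : ℝ):ℂ) • (B * P) := by push_cast; rw [sub_smul, one_smul]; abel
  have hQD : Q * D = ((s - 1 : ℝ):ℂ) • (B * P) - D * P := eq_sub_of_add_eq hD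
  set c1 := (Bᴴ*(Q*B)).trace with hc1
  set c2 := (Bᴴ*(B*P)).trace with hc2
  set c3 := (Dᴴ*(Q*D)).trace with hc3
  set c4 := (Dᴴ*(D*P)).trace with hc4
  set m1 := (Bᴴ*(D*P)).trace with hm1
  set m2 := (Dᴴ*(B*P)).trace with hm2
  set c6 := (Dᴴ*(Q*(Q*(D*P⁻¹)))).trace with hc6
  -- H1
  have H1 : (Aᴴ * B).trace = c1 + (s:ℂ) * c2 := by
    rw [← hAB]
    simp only [conjTranspose_add, conjTranspose_smul, conjTranspose_mul, hQ.1.eq, hP.1.eq,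
      Complex.star_def, Complex.conj_ofReal, add_mul, smul_mul_assoc,
      trace_add, trace_smul, smul_eq_mul, mul_assoc, hc1, hc2]
    rw [Matrix.trace_mul_comm P (Bᴴ * B)]
    simp [mul_assoc]
  -- H2 : tr(Aᴴ D) = (s-1) c2 + (s-1) m1
  have H2 : (Aᴴ * D).trace = ((s-1:ℝ):ℂ) * c2 + ((s-1:ℝ):ℂ) * m1 := by
    rw [← hAB]
    simp only [conjTranspose_add, conjTranspose_smul, conjTranspose_mul, hQ.1.eq, hP.1.eq,
      Complex.star_def, Complex.conj_ofReal, add_mul, smul_mul_assoc,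
      trace_add, trace_smul, smul_eq_mul, mul_assoc]
    rw [show Bᴴ * (Q * D) = Bᴴ * (((s - 1 : ℝ):ℂ) • (B * P) - D * P) by rw [hQD],
        Matrix.trace_mul_comm P (Bᴴ * D)]
    simp only [mul_sub, mul_smul_comm, trace_sub, trace_smul, smul_eq_mul, mul_assoc, hc2, hm1]
    push_cast
    ring
  -- H3 : c3 + c4 = (s-1) m2
  have H3 : c3 + c4 = ((s-1:ℝ):ℂ) * m2 := by
    rw [hc3, hc4, hm2, ← trace_add, ← mul_add, hD]
    simp [mul_smul_comm, trace_smul]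
  -- H3' : m1.re = m2.re
  have H3' : m1.re = m2.re := by
    have e1 : m2 = star m1 := by
      rw [hm1, hm2, ← Matrix.trace_conjTranspose]
      rw [show (Bᴴ*(D*P))ᴴ = P * (Dᴴ * B) by
        simp [conjTranspose_mul, hP.1.eq, mul_assoc]]
      rw [Matrix.trace_mul_comm P (Dᴴ * B)]
      simp [mul_assoc]
    rw [e1, Complex.star_def, Complex.conj_re]
  -- H4 : (s-1)^2 c2 = c6 + 2 c3 + c4
  have H4 : (((s-1:ℝ)^2 : ℝ):ℂ) * c2 = c6 + c3 + c3 + c4 := by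
    have e := congrArg (fun M => (Mᴴ * (M * P⁻¹)).trace) hD
    simp only [conjTranspose_add, conjTranspose_smul, conjTranspose_mul, hQ.1.eq, hP.1.eq,
      Complex.star_def, Complex.conj_ofReal, add_mul, mul_add, smul_mul_assoc, mul_smul_comm,
      smul_smul, trace_add, trace_smul, smul_eq_mul, mul_assoc, hPP, hPiP,
      mul_one, one_mul] at e
    rw [Matrix.trace_mul_comm P (Dᴴ*(Q*(D*P⁻¹))), Matrix.trace_mul_comm P (Dᴴ*D),
        Matrix.trace_mul_comm P (Bᴴ*B)] at e
    simp only [mul_assoc, hPiP, mul_one] at e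
    rw [← hc2, ← hc3, ← hc4, ← hc6] at e
    push_cast
    push_cast at e
    linear_combination -e
  -- H6
  have H6 : (Aᴴ * C).trace = (Aᴴ * B).trace + (Aᴴ * D).trace := by
    rw [hDdef, mul_sub, trace_sub]; ring
  -- positivity
  have p1 : 0 ≤ c1.re := by
    have := trace_re_nonneg' (hQ.posSemidef.conjTranspose_mul_mul_same B)
    simpa [hc1, mul_assoc] using this
  have p2 : 0 ≤ c2.re := by
    have := trace_re_nonneg' (hP.posSemidef.mul_mul_conjTranspose_same B)
    rw [hc2, Matrix.trace_mul_comm]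
    simpa [mul_assoc] using this
  have p3 : 0 ≤ c3.re := by
    have := trace_re_nonneg' (hQ.posSemidef.conjTranspose_mul_mul_same D)
    simpa [hc3, mul_assoc] using this
  have p6 : 0 ≤ c6.re := by
    have := trace_re_nonneg' ((hP.inv).posSemidef.mul_mul_conjTranspose_same (Q*D))
    rw [Matrix.trace_mul_comm] at this
    simpa [hc6, mul_assoc, conjTranspose_mul, hQ.1.eq] using this
  -- assemble
  have R1 := congrArg Complex.re H1
  have R2 := congrArg Complex.re H2
  have R3 := congrArg Complex.re H3
  have R4 := congrArg Complex.re H4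
  have R6 := congrArg Complex.re H6
  simp only [Complex.add_re, Complex.re_ofReal_mul] at R1 R2 R3 R4 R6
  rw [R6, R1, R2]
  have goalid : (s+1)*(c1.re + s*c2.re) - ((c1.re + s*c2.re) + ((s-1)*c2.re + (s-1)*m1.re))
      = s*c1.re + s*c2.re + c6.re + c3.re := by
    linear_combination R4 + R3 - (s-1)*H3'
  linarith [mul_nonneg hs.le p1, mul_nonneg hs.le p2, p3, p6]

/-- Kubo–Ando type operator inequalities: for positive definite `P, Q` and a
function `k(λ) = ∫₀^∞ σ(s)/(s+λ) ds` built from a nonnegative density `σ`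
satisfying the symmetry `σ(1/s) = s σ(s)` and the normalization `k(1) = 1`,
one has `R_P⁻¹ + L_Q⁻¹ ≥ R_P⁻¹ k(L_Q R_P⁻¹) ≥ (R_P + L_Q)⁻¹` in the sense of
quadratic forms on the Hilbert–Schmidt space.  Here, for `s > 0`,
`B s = (L_Q + s R_P)⁻¹(A)` (so that `R_P⁻¹ k(L_Q R_P⁻¹)(A) = ∫₀^∞ B s σ(s) ds`)
and `C = (R_P + L_Q)⁻¹(A)`. -/
theorem kubo_ando_operator_inequalities {n : ℕ}
    (P Q : Matrix (Fin n) (Fin n) ℂ)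
    (hP : P.PosDef) (hQ : Q.PosDef)
    (σ : ℝ → ℝ) (hσ : ∀ s, 0 < s → 0 ≤ σ s)
    (hσsym : ∀ s, 0 < s → σ (1 / s) = s * σ s)
    (hnorm : ∫ s in Set.Ioi (0 : ℝ), σ s / (s + 1) = 1)
    (A C : Matrix (Fin n) (Fin n) ℂ)
    (B : ℝ → Matrix (Fin n) (Fin n) ℂ)
    (hB : ∀ s, 0 < s → Q * B s + (s : ℂ) • (B s * P) = A)
    (hC : Q * C + C * P = A)
    (hInt : IntegrableOn (fun s => ((Aᴴ * B s).trace).re * σ s) (Set.Ioi 0)) :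
    (∫ s in Set.Ioi (0 : ℝ), ((Aᴴ * B s).trace).re * σ s)
        ≤ ((Aᴴ * (A * P⁻¹ + Q⁻¹ * A)).trace).re ∧
    ((Aᴴ * C).trace).re
        ≤ (∫ s in Set.Ioi (0 : ℝ), ((Aᴴ * B s).trace).re * σ s) := by
  have hkey1 : ∀ s : ℝ, 0 < s →
      (s + 1) * ((Aᴴ * B s).trace).re ≤ ((Aᴴ * (A * P⁻¹ + Q⁻¹ * A)).trace).re :=
    fun s hs => key1' hP hQ hs (hB s hs)
  have hkey2 : ∀ s : ℝ, 0 < s →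
      ((Aᴴ * C).trace).re ≤ (s + 1) * ((Aᴴ * B s).trace).re :=
    fun s hs => key2' hP hQ hs (hB s hs) hC

  have hσint : IntegrableOn (fun s => σ s / (s + 1)) (Set.Ioi 0) := by
    by_contra h
    rw [MeasureTheory.integral_undef h] at hnorm
    exact one_ne_zero hnorm.symm
  set K := ((Aᴴ * (A * P⁻¹ + Q⁻¹ * A)).trace).re with hK
  set M := ((Aᴴ * C).trace).re with hM
  constructor
  · have mono : ∀ s ∈ Set.Ioi (0:ℝ),
        ((Aᴴ * B s).trace).re * σ s ≤ K * (σ s / (s + 1)) := by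
      intro s hs
      have hs' : (0:ℝ) < s := hs
      have h1 := hkey1 s hs'
      have hσs := hσ s hs'
      have hs1 : (0:ℝ) < s + 1 := by linarith
      have h2 : ((Aᴴ * B s).trace).re ≤ K / (s + 1) := by
        rw [le_div_iff₀ hs1]; linarith
      calc ((Aᴴ * B s).trace).re * σ s ≤ (K / (s + 1)) * σ s :=
            mul_le_mul_of_nonneg_right h2 hσs
        _ = K * (σ s / (s + 1)) := by ring
    calc (∫ s in Set.Ioi (0:ℝ), ((Aᴴ * B s).trace).re * σ s)
        ≤ ∫ s in Set.Ioi (0:ℝ), K * (σ s / (s + 1)) :=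
          setIntegral_mono_on hInt (hσint.const_mul K) measurableSet_Ioi mono
      _ = K * ∫ s in Set.Ioi (0:ℝ), σ s / (s + 1) := integral_const_mul K _
      _ = K := by rw [hnorm, mul_one]
  · have mono : ∀ s ∈ Set.Ioi (0:ℝ),
        M * (σ s / (s + 1)) ≤ ((Aᴴ * B s).trace).re * σ s := by
      intro s hs
      have hs' : (0:ℝ) < s := hs
      have h1 := hkey2 s hs'
      have hσs := hσ s hs'
      have hs1 : (0:ℝ) < s + 1 := by linarith
      have h2 : M / (s + 1) ≤ ((Aᴴ * B s).trace).re := by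
        rw [div_le_iff₀ hs1]; linarith
      calc M * (σ s / (s + 1)) = (M / (s + 1)) * σ s := by ring
        _ ≤ ((Aᴴ * B s).trace).re * σ s := mul_le_mul_of_nonneg_right h2 hσs
    calc M = M * ∫ s in Set.Ioi (0:ℝ), σ s / (s + 1) := by rw [hnorm, mul_one]
      _ = ∫ s in Set.Ioi (0:ℝ), M * (σ s / (s + 1)) := (integral_const_mul M _).symm
      _ ≤ ∫ s in Set.Ioi (0:ℝ), ((Aᴴ * B s).trace).re * σ s :=
          setIntegral_mono_on (hσint.const_mul M) hInt measurableSet_Ioi mono
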